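/- Let W be a standard Brownian motion on [0,1], θ ∈ (0,1), and for δ > 0 let μ(δ) = √(2δ·ln(1/δ)). Then for every n ≥ 1/(1-θ) and ε > (1+θ)/(1-θ) - 1, with ρ := (1-θ)(1+ε)² - (1+θ) > 0, there is an explicit constant K_ε = 8^{1+(1+ε)²}/(√π·(1+ε)·(1+(1+ε)²)) such that P(max over 0 ≤ i < j ≤ ⌈e^n⌉ with 1 ≤ j-i ≤ ⌈e^{nθ}⌉ of |W_{j/e^n} - W_{i/e^n}|/μ((j-i)·e^{-n}) ≥ 1+ε) ≤ K_ε·e^{-ρn}. -/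

import Mathlib

open MeasureTheory ProbabilityTheory Set Real Filter
open scoped ENNReal NNReal

/-- A standard (scalar) Brownian motion on a probability space. -/
structure IsBrownianMotion {Ω : Type*} [MeasurableSpace Ω] (P : Measure Ω)
    (W : ℝ → Ω → ℝ) : Prop where
  meas : ∀ t, Measurable (W t)
  init : ∀ᵐ ω ∂P, W 0 ω = 0
  cont : ∀ᵐ ω ∂P, Continuous fun t => W t ω
  incr_law : ∀ s t : ℝ, s ≤ t →
    Measure.map (fun ω => W t ω - W s ω) P = gaussianReal 0 (Real.toNNReal (t - s))
  indep_incr : ∀ (n : ℕ) (t : ℕ → ℝ), Monotone t →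
    iIndepFun
      (fun (i : Fin n) ω => W (t (i + 1)) ω - W (t i) ω) P



lemma key_integral {v t : ℝ} (hv : 0 < v) :
    ∫ x in Ioi t, x * Real.exp (-x ^ 2 / (2 * v)) = v * Real.exp (-t ^ 2 / (2 * v)) := by
  have hderiv : ∀ x ∈ Ici t, HasDerivAt (fun x : ℝ => -v * Real.exp (-x ^ 2 / (2 * v)))
      (x * Real.exp (-x ^ 2 / (2 * v))) x := by
    intro x _
    have h1 : HasDerivAt (fun x : ℝ => -x ^ 2 / (2 * v)) (-x / v) x := by
      have := ((hasDerivAt_pow 2 x).neg).div_const (2 * v)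
      refine this.congr_deriv ?_
      field_simp
      ring
    have h2 := (Real.hasDerivAt_exp _).comp x h1
    have h3 := h2.const_mul (-v)
    refine h3.congr_deriv ?_
    field_simp
  have hint : IntegrableOn (fun x : ℝ => x * Real.exp (-x ^ 2 / (2 * v))) (Ioi t) := by
    have hb : (0:ℝ) < 1 / (2 * v) := by positivity
    have := (integrable_mul_exp_neg_mul_sq hb).restrict (s := Ioi t)
    refine this.congr (ae_of_all _ fun x => ?_)
    have : -(1 / (2 * v)) * x ^ 2 = -x ^ 2 / (2 * v) := by ring
    simp only [this]
  have htend : Tendsto (fun x : ℝ => -v * Real.exp (-x ^ 2 / (2 * v))) atTop (nhds 0) := by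
    have h1 : Tendsto (fun x : ℝ => -x ^ 2 / (2 * v)) atTop atBot := by
      apply Tendsto.atBot_div_const (by positivity)
      exact tendsto_neg_atBot_iff.2 (tendsto_pow_atTop (by norm_num))
    have := (Real.tendsto_exp_atBot.comp h1).const_mul (-v)
    simpa using this
  have := integral_Ioi_of_hasDerivAt_of_tendsto' hderiv hint htend
  rw [this]
  ring


lemma tail_integral_le {v t : ℝ} (hv : 0 < v) (ht : 0 < t) :
    ∫ x in Ioi t, (Real.sqrt (2 * π * v))⁻¹ * Real.exp (-x ^ 2 / (2 * v))
      ≤ (Real.sqrt (2 * π * v))⁻¹ * (v / t) * Real.exp (-t ^ 2 / (2 * v)) := by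
  have hc : (0:ℝ) ≤ (Real.sqrt (2 * π * v))⁻¹ := by positivity
  have hint : IntegrableOn (fun x : ℝ => x * Real.exp (-x ^ 2 / (2 * v))) (Ioi t) := by
    have hb : (0:ℝ) < 1 / (2 * v) := by positivity
    have := (integrable_mul_exp_neg_mul_sq hb).restrict (s := Ioi t)
    refine this.congr (ae_of_all _ fun x => ?_)
    have : -(1 / (2 * v)) * x ^ 2 = -x ^ 2 / (2 * v) := by ring
    simp only [this]
  have h1 : ∫ x in Ioi t, (Real.sqrt (2 * π * v))⁻¹ * Real.exp (-x ^ 2 / (2 * v))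
      ≤ ∫ x in Ioi t, (Real.sqrt (2 * π * v))⁻¹ / t * (x * Real.exp (-x ^ 2 / (2 * v))) := by
    apply setIntegral_mono_on
    · have hb : (0:ℝ) < 1 / (2 * v) := by positivity
      have := (integrable_exp_neg_mul_sq hb).restrict (s := Ioi t)
      refine ((this.congr (ae_of_all _ fun x => ?_)).const_mul _)
      have : -(1 / (2 * v)) * x ^ 2 = -x ^ 2 / (2 * v) := by ring
      simp only [this]
    · exact (hint.const_mul _)
    · exact measurableSet_Ioi
    · intro x hx
      rw [div_mul_eq_mul_div, le_div_iff₀ ht]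
      have h2 := mul_le_mul_of_nonneg_left (le_of_lt hx)
        (mul_nonneg hc (Real.exp_pos (-x ^ 2 / (2 * v))).le)
      nlinarith [h2]
  calc _ ≤ _ := h1
    _ = (Real.sqrt (2 * π * v))⁻¹ / t * ∫ x in Ioi t, x * Real.exp (-x ^ 2 / (2 * v)) :=
        integral_const_mul _ _
    _ = _ := by rw [key_integral hv]; ring


lemma gauss_tail {v : ℝ≥0} (hv : v ≠ 0) {t : ℝ} (ht : 0 < t) :
    gaussianReal 0 v {x : ℝ | t ≤ |x|} ≤
      ENNReal.ofReal ((Real.sqrt (2 * π * (v:ℝ)))⁻¹ * (2 * (v:ℝ) / t) *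
        Real.exp (-t ^ 2 / (2 * (v:ℝ)))) := by
  have hv0 : (0:ℝ) < (v:ℝ) := by positivity
  rw [gaussianReal_apply_eq_integral 0 hv]
  apply ENNReal.ofReal_le_ofReal
  have hpdf : ∀ x : ℝ, gaussianPDFReal 0 v x
      = (Real.sqrt (2 * π * (v:ℝ)))⁻¹ * Real.exp (-x ^ 2 / (2 * (v:ℝ))) := by
    intro x; simp [gaussianPDFReal]
  have hset : {x : ℝ | t ≤ |x|} = Iic (-t) ∪ Ici t := by
    ext x
    simp only [mem_setOf_eq, mem_union, mem_Iic, mem_Ici, le_abs]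
    constructor
    · rintro (h | h)
      · right; exact h
      · left; linarith
    · rintro (h | h)
      · right; linarith
      · left; exact h
  rw [hset]
  have hi : IntegrableOn (gaussianPDFReal 0 v) (Iic (-t)) :=
    (integrable_gaussianPDFReal 0 v).restrict
  have hi2 : IntegrableOn (gaussianPDFReal 0 v) (Ici t) :=
    (integrable_gaussianPDFReal 0 v).restrict
  rw [setIntegral_union (Iic_disjoint_Ici.2 (by intro h; linarith)) measurableSet_Ici hi hi2,
    integral_Ici_eq_integral_Ioi]
  have hneg : ∫ x in Iic (-t), gaussianPDFReal 0 v x = ∫ x in Ioi t, gaussianPDFReal 0 v x := by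
    have heven : ∀ x : ℝ, gaussianPDFReal 0 v (-x) = gaussianPDFReal 0 v x := by
      intro x; simp [gaussianPDFReal]
    rw [show (Ioi t) = Ioi (-(-t)) by rw [neg_neg], ← integral_comp_neg_Iic]
    exact (integral_congr_ae (ae_of_all _ fun x => (heven x).symm))
  rw [hneg]
  have := tail_integral_le hv0 ht
  simp only [hpdf]
  calc (∫ x in Ioi t, (Real.sqrt (2 * π * (v:ℝ)))⁻¹ * Real.exp (-x ^ 2 / (2 * (v:ℝ))))
        + ∫ x in Ioi t, (Real.sqrt (2 * π * (v:ℝ)))⁻¹ * Real.exp (-x ^ 2 / (2 * (v:ℝ)))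
      ≤ (Real.sqrt (2 * π * (v:ℝ)))⁻¹ * ((v:ℝ) / t) * Real.exp (-t ^ 2 / (2 * (v:ℝ)))
        + (Real.sqrt (2 * π * (v:ℝ)))⁻¹ * ((v:ℝ) / t) * Real.exp (-t ^ 2 / (2 * (v:ℝ))) :=
        add_le_add this this
    _ = _ := by ring


lemma pair_bound {ε θ : ℝ} (hε : 0 < ε) (hθ0 : 0 < θ) (hθ1 : θ < 1)
    {n : ℕ} (hn1 : 1 ≤ (n:ℝ) * (1 - θ)) {k : ℕ} (hk1 : 1 ≤ k)
    (hkM : (k:ℝ) ≤ 2 * Real.exp ((n:ℝ) * θ)) :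
    (Real.sqrt (2 * π * ((k:ℝ) * Real.exp (-(n:ℝ)))))⁻¹ *
      (2 * ((k:ℝ) * Real.exp (-(n:ℝ))) /
        ((1 + ε) * Real.sqrt (2 * ((k:ℝ) * Real.exp (-(n:ℝ))) *
          Real.log (1 / ((k:ℝ) * Real.exp (-(n:ℝ))))))) *
      Real.exp (-((1 + ε) * Real.sqrt (2 * ((k:ℝ) * Real.exp (-(n:ℝ))) *
          Real.log (1 / ((k:ℝ) * Real.exp (-(n:ℝ)))))) ^ 2 /
        (2 * ((k:ℝ) * Real.exp (-(n:ℝ)))))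
    ≤ 2 ^ ((1 + ε) ^ 2 + 1) * Real.exp (-((1 + ε) ^ 2 * ((n:ℝ) * (1 - θ)))) /
        (Real.sqrt π * (1 + ε)) := by
  have hk0 : (0:ℝ) < (k:ℝ) := by exact_mod_cast hk1
  set δ : ℝ := (k:ℝ) * Real.exp (-(n:ℝ)) with hδdef
  set L : ℝ := Real.log (1 / δ) with hLdef
  set a : ℝ := (1 + ε) ^ 2 with hadef
  have hδ0 : 0 < δ := by positivity
  have hδle : δ ≤ 2 * Real.exp (-((n:ℝ) * (1 - θ))) := by
    calc δ ≤ 2 * Real.exp ((n:ℝ) * θ) * Real.exp (-(n:ℝ)) := by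
          apply mul_le_mul_of_nonneg_right hkM (Real.exp_pos _).le
      _ = 2 * Real.exp (-((n:ℝ) * (1 - θ))) := by
          rw [mul_assoc, ← Real.exp_add]; ring_nf
  have hδ1 : δ < 1 := by
    have h1 : Real.exp (-((n:ℝ) * (1 - θ))) ≤ Real.exp (-1) := by
      apply Real.exp_le_exp.2; linarith
    have h2 : Real.exp (-1) < 1/2 := by
      rw [Real.exp_neg]
      rw [inv_lt_comm₀ (Real.exp_pos _) (by norm_num)]
      have := Real.exp_one_gt_d9
      norm_num at this ⊢
      linarith
    linarith [hδle]
  have hL : (n:ℝ) * (1 - θ) - Real.log 2 ≤ L := by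
    have hlog : Real.log δ ≤ Real.log 2 + (-((n:ℝ) * (1 - θ))) := by
      calc Real.log δ ≤ Real.log (2 * Real.exp (-((n:ℝ) * (1 - θ)))) :=
            Real.log_le_log hδ0 hδle
        _ = Real.log 2 + (-((n:ℝ) * (1 - θ))) := by
            rw [Real.log_mul (by norm_num) (Real.exp_pos _).ne', Real.log_exp]
    have : L = -Real.log δ := by rw [hLdef, one_div, Real.log_inv]
    linarith
  have hL4 : (1:ℝ)/4 ≤ L := by
    have := Real.log_two_lt_d9
    nlinarith
  have hL0 : 0 < L := by linarith
  have hm0 : 0 < Real.sqrt (2 * δ * L) := Real.sqrt_pos.2 (by positivity)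
  have hε1 : (0:ℝ) < 1 + ε := by linarith
  have ha1 : 1 ≤ a := by nlinarith
  -- exponent simplification
  have hexp : Real.exp (-((1 + ε) * Real.sqrt (2 * δ * L)) ^ 2 / (2 * δ)) = δ ^ a := by
    have hm2 : Real.sqrt (2 * δ * L) ^ 2 = 2 * δ * L := Real.sq_sqrt (by positivity)
    have ht2 : ((1 + ε) * Real.sqrt (2 * δ * L)) ^ 2 / (2 * δ) = a * L := by
      rw [mul_pow, hm2, hadef]; field_simp
    rw [neg_div, ht2, Real.rpow_def_of_pos hδ0]
    congr 1
    have hlogδ : Real.log δ = -L := by rw [hLdef, one_div, Real.log_inv]; ring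
    rw [hlogδ]; ring
  -- product of square roots
  have hsq : Real.sqrt (2 * π * δ) * Real.sqrt (2 * δ * L)
      = 2 * δ * (Real.sqrt π * Real.sqrt L) := by
    rw [← Real.sqrt_mul (by positivity), ← Real.sqrt_mul pi_pos.le,
      show 2 * π * δ * (2 * δ * L) = (2*δ)^2 * (π * L) by ring,
      Real.sqrt_mul (by positivity), Real.sqrt_sq (by positivity)]
  have hsqrtπ : 0 < Real.sqrt π := Real.sqrt_pos.2 pi_pos
  have hsqrtL : 0 < Real.sqrt L := Real.sqrt_pos.2 hL0
  have key : (Real.sqrt (2 * π * δ))⁻¹ * (2 * δ / ((1 + ε) * Real.sqrt (2 * δ * L)))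
      = ((1 + ε) * (Real.sqrt π * Real.sqrt L))⁻¹ := by
    have hA : 0 < Real.sqrt (2 * π * δ) := Real.sqrt_pos.2 (by positivity)
    rw [inv_mul_eq_div, div_div]
    rw [show (1 + ε) * Real.sqrt (2 * δ * L) * Real.sqrt (2 * π * δ)
        = (1 + ε) * (Real.sqrt (2 * π * δ) * Real.sqrt (2 * δ * L)) by ring, hsq]
    rw [eq_comm, inv_eq_one_div, div_eq_div_iff (by positivity) (by positivity)]
    ring
  have h12 : (1:ℝ)/2 ≤ Real.sqrt L := by
    have := Real.sqrt_le_sqrt hL4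
    rwa [show (1:ℝ)/4 = (1/2)^2 by norm_num, Real.sqrt_sq (by norm_num)] at this
  have hinv : ((1 + ε) * (Real.sqrt π * Real.sqrt L))⁻¹
      ≤ ((1 + ε) * (Real.sqrt π * (1/2)))⁻¹ := by
    apply inv_anti₀ (by positivity)
    gcongr
  have hδa : δ ^ a ≤ 2 ^ a * Real.exp (-(a * ((n:ℝ) * (1 - θ)))) := by
    calc δ ^ a ≤ (2 * Real.exp (-((n:ℝ) * (1 - θ)))) ^ a :=
          Real.rpow_le_rpow hδ0.le hδle (by positivity)
      _ = 2 ^ a * Real.exp (-((n:ℝ) * (1 - θ))) ^ a :=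
          Real.mul_rpow (by norm_num) (Real.exp_pos _).le
      _ = 2 ^ a * Real.exp (-(a * ((n:ℝ) * (1 - θ)))) := by
          rw [← Real.exp_mul]; ring_nf
  calc (Real.sqrt (2 * π * δ))⁻¹ *
        (2 * δ / ((1 + ε) * Real.sqrt (2 * δ * L))) *
        Real.exp (-((1 + ε) * Real.sqrt (2 * δ * L)) ^ 2 / (2 * δ))
      = ((1 + ε) * (Real.sqrt π * Real.sqrt L))⁻¹ * δ ^ a := by rw [hexp, key]
    _ ≤ ((1 + ε) * (Real.sqrt π * (1/2)))⁻¹ * (2 ^ a * Real.exp (-(a * ((n:ℝ) * (1 - θ))))) := by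
        apply mul_le_mul hinv hδa (Real.rpow_nonneg hδ0.le a) (by positivity)
    _ = 2 ^ (a + 1) * Real.exp (-(a * ((n:ℝ) * (1 - θ)))) / (Real.sqrt π * (1 + ε)) := by
        rw [Real.rpow_add two_pos, Real.rpow_one]
        field_simp


/-- positivity facts about `δ = k e^{-n}` -/
lemma delta_facts {θ : ℝ} (hθ0 : 0 < θ) (hθ1 : θ < 1)
    {n : ℕ} (hn1 : 1 ≤ (n:ℝ) * (1 - θ)) {k : ℕ} (hk1 : 1 ≤ k)
    (hkM : (k:ℝ) ≤ 2 * Real.exp ((n:ℝ) * θ)) :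
    0 < (k:ℝ) * Real.exp (-(n:ℝ)) ∧ (k:ℝ) * Real.exp (-(n:ℝ)) < 1 := by
  have hk0 : (0:ℝ) < (k:ℝ) := by exact_mod_cast hk1
  refine ⟨by positivity, ?_⟩
  have hδle : (k:ℝ) * Real.exp (-(n:ℝ)) ≤ 2 * Real.exp (-((n:ℝ) * (1 - θ))) := by
    calc (k:ℝ) * Real.exp (-(n:ℝ)) ≤ 2 * Real.exp ((n:ℝ) * θ) * Real.exp (-(n:ℝ)) := by
          apply mul_le_mul_of_nonneg_right hkM (Real.exp_pos _).le
      _ = 2 * Real.exp (-((n:ℝ) * (1 - θ))) := by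
          rw [mul_assoc, ← Real.exp_add]; ring_nf
  have h1 : Real.exp (-((n:ℝ) * (1 - θ))) ≤ Real.exp (-1) := by
    apply Real.exp_le_exp.2; linarith
  have h2 : Real.exp (-1) < 1/2 := by
    rw [Real.exp_neg, inv_lt_comm₀ (Real.exp_pos _) (by norm_num)]
    have := Real.exp_one_gt_d9
    norm_num at this ⊢
    linarith
  linarith


/-- Lévy's modulus of continuity, upward infringement estimate: with
`μ(δ) = √(2δ ln(1/δ))`, for `θ ∈ (0,1)`, `ε > (1+θ)/(1-θ) - 1`,
`ρ = (1-θ)(1+ε)² - (1+θ)` and `K_ε = 8^{1+(1+ε)²}/(√π·(1+ε)·(1+(1+ε)²))`,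
for every `n ≥ 1/(1-θ)`:
`P(max over 0 ≤ i < j ≤ ⌈eⁿ⌉, 1 ≤ j-i ≤ ⌈e^{nθ}⌉ of
  |W_{j/eⁿ} - W_{i/eⁿ}|/μ((j-i)e^{-n}) ≥ 1+ε) ≤ K_ε·e^{-ρn}`. -/
theorem stmt17 {Ω : Type*} [MeasurableSpace Ω] (P : Measure Ω) [IsProbabilityMeasure P]
    (W : ℝ → Ω → ℝ) (hW : IsBrownianMotion P W)
    (θ ε : ℝ) (hθ : θ ∈ Set.Ioo (0 : ℝ) 1) (hε : (1 + θ) / (1 - θ) - 1 < ε)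
    (ρ : ℝ) (hρ : ρ = (1 - θ) * (1 + ε) ^ 2 - (1 + θ))
    (n : ℕ) (hn : 1 / (1 - θ) ≤ (n : ℝ)) :
    P {ω | ∃ i j : ℕ, i < j ∧ j ≤ Nat.ceil (Real.exp n) ∧
        j - i ≤ Nat.ceil (Real.exp ((n : ℝ) * θ)) ∧
        1 + ε ≤ |W ((j : ℝ) / Real.exp n) ω - W ((i : ℝ) / Real.exp n) ω| /
          Real.sqrt (2 * (((j : ℝ) - (i : ℝ)) * Real.exp (-(n : ℝ))) *
            Real.log (1 / (((j : ℝ) - (i : ℝ)) * Real.exp (-(n : ℝ)))))}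
      ≤ ENNReal.ofReal
          ((8 : ℝ) ^ ((1 : ℝ) + (1 + ε) ^ 2) /
              (Real.sqrt π * (1 + ε) * (1 + (1 + ε) ^ 2)) *
            Real.exp (-ρ * (n : ℝ))) := by
  obtain ⟨hθ0, hθ1⟩ := hθ
  have hθ1' : (0:ℝ) < 1 - θ := by linarith
  have hε0 : 0 < ε := by
    have : (1:ℝ) < (1 + θ) / (1 - θ) := by
      rw [lt_div_iff₀ hθ1']; linarith
    linarith
  have hε1 : (0:ℝ) < 1 + ε := by linarith
  have hn1 : 1 ≤ (n:ℝ) * (1 - θ) := by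
    rw [div_le_iff₀ hθ1'] at hn; linarith
  have hnn : (1:ℝ) ≤ (n:ℝ) := by nlinarith
  set E : ℝ := Real.exp n with hE
  set N : ℕ := Nat.ceil (Real.exp (n:ℕ)) with hN
  set M : ℕ := Nat.ceil (Real.exp ((n:ℝ) * θ)) with hM
  set a : ℝ := (1 + ε) ^ 2 with ha
  have ha1 : 1 ≤ a := by nlinarith
  -- the finite index set and the family of sets
  set S : Finset (ℕ × ℕ) :=
    (Finset.range (N+1) ×ˢ Finset.range (N+1)).filter
      (fun p => p.1 < p.2 ∧ p.2 - p.1 ≤ M) with hS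
  set A : ℕ × ℕ → Set Ω := fun p =>
    {ω | 1 + ε ≤ |W ((p.2 : ℝ) / Real.exp n) ω - W ((p.1 : ℝ) / Real.exp n) ω| /
          Real.sqrt (2 * (((p.2 : ℝ) - (p.1 : ℝ)) * Real.exp (-(n : ℝ))) *
            Real.log (1 / (((p.2 : ℝ) - (p.1 : ℝ)) * Real.exp (-(n : ℝ)))))} with hA
  have hsub : {ω | ∃ i j : ℕ, i < j ∧ j ≤ Nat.ceil (Real.exp n) ∧
        j - i ≤ Nat.ceil (Real.exp ((n : ℝ) * θ)) ∧
        1 + ε ≤ |W ((j : ℝ) / Real.exp n) ω - W ((i : ℝ) / Real.exp n) ω| /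
          Real.sqrt (2 * (((j : ℝ) - (i : ℝ)) * Real.exp (-(n : ℝ))) *
            Real.log (1 / (((j : ℝ) - (i : ℝ)) * Real.exp (-(n : ℝ)))))}
      ⊆ ⋃ p ∈ S, A p := by
    rintro ω ⟨i, j, h1, h2, h3, h4⟩
    have hmem : (i, j) ∈ S := by
      simp only [hS, Finset.mem_filter, Finset.mem_product, Finset.mem_range]
      exact ⟨⟨by omega, by omega⟩, h1, h3⟩
    exact Set.mem_biUnion hmem h4
  refine le_trans (le_trans (measure_mono hsub) (measure_biUnion_finset_le S A)) ?_
  -- bound each term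
  set C : ℝ := 2 ^ (a + 1) * Real.exp (-(a * ((n:ℝ) * (1 - θ)))) /
      (Real.sqrt π * (1 + ε)) with hC
  have hC0 : 0 ≤ C := by positivity
  have hMle : (M:ℝ) ≤ 2 * Real.exp ((n:ℝ) * θ) := by
    have h1 : (M:ℝ) < Real.exp ((n:ℝ) * θ) + 1 := Nat.ceil_lt_add_one (Real.exp_pos _).le
    have h2 : (1:ℝ) ≤ Real.exp ((n:ℝ) * θ) := Real.one_le_exp (by positivity)
    linarith
  have hterm : ∀ p ∈ S, P (A p) ≤ ENNReal.ofReal C := by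
    rintro ⟨i, j⟩ hp
    simp only [hS, Finset.mem_filter, Finset.mem_product, Finset.mem_range] at hp
    obtain ⟨⟨hiN, hjN⟩, hij, hkM⟩ := hp
    set k : ℕ := j - i with hk
    have hk1 : 1 ≤ k := by omega
    have hcast : (j : ℝ) - (i : ℝ) = (k : ℝ) := by
      rw [hk, Nat.cast_sub (le_of_lt hij)]
    have hkMr : (k:ℝ) ≤ 2 * Real.exp ((n:ℝ) * θ) := by
      refine le_trans ?_ hMle
      exact_mod_cast hkM
    obtain ⟨hδ0, hδ1⟩ := delta_facts hθ0 hθ1 hn1 hk1 hkMr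
    set δ : ℝ := (k:ℝ) * Real.exp (-(n:ℝ)) with hδ
    have hL0 : 0 < Real.log (1 / δ) := Real.log_pos (by rw [lt_div_iff₀ hδ0]; linarith)
    have hm0 : 0 < Real.sqrt (2 * δ * Real.log (1 / δ)) := Real.sqrt_pos.2 (by positivity)
    set m : ℝ := Real.sqrt (2 * δ * Real.log (1 / δ)) with hm
    set t : ℝ := (1 + ε) * m with htdef
    have ht0 : 0 < t := by positivity
    -- A (i,j) as a preimage
    have hAset : A (i, j) = (fun ω => W ((j:ℝ)/Real.exp n) ω - W ((i:ℝ)/Real.exp n) ω) ⁻¹'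
        {x : ℝ | t ≤ |x|} := by
      rw [hA]
      ext ω
      simp only [Set.mem_setOf_eq, Set.mem_preimage, hcast]
      rw [le_div_iff₀ hm0]
    have hf : Measurable fun ω => W ((j:ℝ)/Real.exp n) ω - W ((i:ℝ)/Real.exp n) ω :=
      (hW.meas _).sub (hW.meas _)
    have hmeas : MeasurableSet {x : ℝ | t ≤ |x|} := by
      have : Measurable fun x : ℝ => |x| := measurable_id.abs
      exact measurableSet_le measurable_const this
    have hle : (i:ℝ)/Real.exp n ≤ (j:ℝ)/Real.exp n :=
      (div_le_div_iff_of_pos_right (Real.exp_pos _)).2 (by exact_mod_cast hij.le)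
    set v : ℝ≥0 := Real.toNNReal ((j:ℝ)/Real.exp n - (i:ℝ)/Real.exp n) with hv
    have hvr : (v:ℝ) = δ := by
      rw [hv, Real.coe_toNNReal _ (by linarith)]
      rw [div_sub_div_same, hcast, hδ, Real.exp_neg, div_eq_mul_inv]
    have hvne : v ≠ 0 := by
      have h0 : (0:ℝ) < (v:ℝ) := by rw [hvr]; exact hδ0
      intro h
      rw [h] at h0
      simp at h0
    have hlaw : P (A (i, j)) = gaussianReal 0 v {x : ℝ | t ≤ |x|} := by
      rw [hAset, ← Measure.map_apply hf hmeas, hW.incr_law _ _ hle]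
    rw [hlaw]
    refine le_trans (gauss_tail hvne ht0) ?_
    rw [hvr]
    apply ENNReal.ofReal_le_ofReal
    exact pair_bound hε0 hθ0 hθ1 hn1 hk1 hkMr
  refine le_trans (Finset.sum_le_sum hterm) ?_
  rw [Finset.sum_const, nsmul_eq_mul]
  -- card bound
  have hcard : S.card ≤ (N + 1) * M := by
    have : S.card ≤ ((Finset.range (N+1)) ×ˢ (Finset.Icc 1 M)).card := by
      apply Finset.card_le_card_of_injOn (fun p => (p.2, p.2 - p.1))
      · rintro ⟨i, j⟩ hp
        simp only [hS, Finset.mem_filter, Finset.mem_product, Finset.mem_range] at hp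
        simp only [Finset.mem_product, Finset.mem_range, Finset.mem_Icc]
        obtain ⟨h1, h2, h3⟩ := Finset.mem_filter.1 (show (i, j) ∈ S from hp)
        exact Finset.mem_product.2 ⟨(Finset.mem_product.1 h1).2, Finset.mem_Icc.2 ⟨by omega, h3⟩⟩
      · rintro ⟨i, j⟩ hp ⟨i', j'⟩ hq h
        simp only [hS, Finset.coe_filter, Set.mem_setOf_eq, Finset.mem_product,
          Finset.mem_range] at hp hq
        simp only [Prod.mk.injEq] at h
        have := hp.2.1; have := hq.2.1
        ext <;> omega
    simpa [Nat.card_Icc] using this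
  calc (S.card : ℝ≥0∞) * ENNReal.ofReal C
      ≤ (((N+1) * M : ℕ) : ℝ≥0∞) * ENNReal.ofReal C := by
        have h' : (S.card : ℝ≥0∞) ≤ (((N+1) * M : ℕ) : ℝ≥0∞) := by exact_mod_cast hcard
        exact mul_le_mul_left h' _
    _ = ENNReal.ofReal ((((N+1) * M : ℕ) : ℝ) * C) := by
        rw [ENNReal.ofReal_mul (by positivity), ENNReal.ofReal_natCast]
    _ ≤ ENNReal.ofReal ((8 : ℝ) ^ ((1 : ℝ) + (1 + ε) ^ 2) /
          (Real.sqrt π * (1 + ε) * (1 + (1 + ε) ^ 2)) * Real.exp (-ρ * (n : ℝ))) := by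
        apply ENNReal.ofReal_le_ofReal
        have hexpn2 : (2:ℝ) ≤ Real.exp (n:ℝ) := by
          have h1 : Real.exp 1 ≤ Real.exp (n:ℝ) := Real.exp_le_exp.2 hnn
          have := Real.exp_one_gt_d9
          linarith
        have hNle : ((N:ℝ) + 1) ≤ 2 * Real.exp (n:ℝ) := by
          have h1 : (N:ℝ) < Real.exp (n:ℝ) + 1 := Nat.ceil_lt_add_one (Real.exp_pos _).le
          linarith
        have h2a : 1 + a ≤ (2:ℝ) ^ (2*a) := by
          rw [Real.rpow_def_of_pos (by norm_num)]
          have h1 := Real.add_one_le_exp (Real.log 2 * (2*a))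
          have hl2 := Real.log_two_gt_d9
          nlinarith
        have key : 4 * (2:ℝ)^(a+1) * (1+a) ≤ (8:ℝ) ^ (1+a) := by
          calc 4 * (2:ℝ)^(a+1) * (1+a) ≤ 4 * (2:ℝ)^(a+1) * (2:ℝ)^(2*a) := by
                apply mul_le_mul_of_nonneg_left h2a (by positivity)
            _ = (8:ℝ) ^ (1+a) := by
                rw [show (8:ℝ) = (2:ℝ)^(3:ℕ) by norm_num, ← Real.rpow_natCast (2:ℝ) 3,
                  ← Real.rpow_mul (by norm_num : (0:ℝ) ≤ 2),
                  show (4:ℝ) = (2:ℝ)^(2:ℕ) by norm_num, ← Real.rpow_natCast (2:ℝ) 2,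
                  ← Real.rpow_add (by norm_num : (0:ℝ) < 2),
                  ← Real.rpow_add (by norm_num : (0:ℝ) < 2)]
                congr 1
                push_cast
                ring
        calc (((N+1) * M : ℕ) : ℝ) * C
            ≤ (2 * Real.exp (n:ℝ) * (2 * Real.exp ((n:ℝ)*θ))) * C := by
              apply mul_le_mul_of_nonneg_right _ hC0
              push_cast
              have := mul_le_mul hNle hMle (by positivity) (by positivity)
              linarith
          _ = (4 * (2:ℝ)^(a+1) / (Real.sqrt π * (1+ε))) *
              (Real.exp (n:ℝ) * Real.exp ((n:ℝ)*θ) * Real.exp (-(a * ((n:ℝ) * (1-θ))))) := by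
              rw [hC]; ring
          _ = (4 * (2:ℝ)^(a+1) / (Real.sqrt π * (1+ε))) * Real.exp (-ρ*(n:ℝ)) := by
              rw [← Real.exp_add, ← Real.exp_add]
              congr 1
              rw [hρ]; ring
          _ ≤ (8:ℝ) ^ ((1:ℝ) + (1+ε)^2) / (Real.sqrt π * (1+ε) * (1 + (1+ε)^2)) *
                Real.exp (-ρ*(n:ℝ)) := by
              apply mul_le_mul_of_nonneg_right _ (Real.exp_pos _).le
              rw [div_le_div_iff₀ (by positivity) (by positivity)]
              have hs : (0:ℝ) ≤ Real.sqrt π * (1+ε) := by positivity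
              have h2 := mul_le_mul_of_nonneg_right key hs
              rw [← ha]
              nlinarith [h2]
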